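/- Let g : ℤ^d → [0,∞) with |g| = Σ_x g(x) < ∞, and fix constants b, r ∈ [0,∞). There exists a constant C < ∞ (depending only on g, b, r, d) such that for every probability vector ρ on ℤ^d and every ξ : ℤ^d → [0,∞) with ξ_x ≤ b·1_{\{|x| ≤ r\}} for all x, the following holds. For z ∈ ℤ^d with 1 + (|ξ|−1)ρ_z > 0, define J̄_{x,z} = (ρ_x + (ξ−δ₀)_{x−z} ρ_z)/(1 + (|ξ|−1)ρ_z) and F_z(ξ) = Σ_{x,y∈ℤ^d} g(x−y)( J̄_{x,z} J̄_{y,z} − ρ_x ρ_y ). Then: (i) |F_z(ξ)| ≤ 2|g|; (ii) if moreover ρ_z ≤ 1/2, then |F_z(ξ)| ≤ C ρ_z; (iii) if 1 + (|ξ|−1)ρ_z > 0 for all z ∈ ℤ^d, then Σ_{z∈ℤ^d} F_z(ξ)² ≤ (16|g|² + C²) Σ_{x∈ℤ^d} ρ_x². -/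

import Mathlib

open scoped BigOperators

set_option maxHeartbeats 1000000 in
/-- Core bound: double sum against `g` of `J⊗J - ρ⊗ρ`. -/
lemma stmt13_keyA {d : ℕ} (g : (Fin d → ℤ) → ℝ)
    (hg0 : ∀ x, 0 ≤ g x) (hg : Summable g)
    (ρ J : (Fin d → ℤ) → ℝ) (hρ0 : ∀ x, 0 ≤ ρ x) (hρ1 : HasSum ρ 1)
    (hJ0 : ∀ x, 0 ≤ J x) (hJ1 : HasSum J 1)
    (E : ℝ) (hEs : Summable fun x => |J x - ρ x|) (hE : (∑' x, |J x - ρ x|) ≤ E) :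
    |∑' q : (Fin d → ℤ) × (Fin d → ℤ),
        g (q.1 - q.2) * (J q.1 * J q.2 - ρ q.1 * ρ q.2)| ≤
      (∑' x, g x) * min 2 (2 * E) := by
  set M := ∑' x, g x with hM
  have hM0 : 0 ≤ M := tsum_nonneg hg0
  have hMle : ∀ x, g x ≤ M := fun x => Summable.le_tsum hg x fun j _ => hg0 j
  have sJ : Summable J := hJ1.summable
  have sρ : Summable ρ := hρ1.summable
  have sJJ : Summable fun q : (Fin d → ℤ) × (Fin d → ℤ) => J q.1 * J q.2 :=
    sJ.mul_of_nonneg sJ hJ0 hJ0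
  have sρρ : Summable fun q : (Fin d → ℤ) × (Fin d → ℤ) => ρ q.1 * ρ q.2 :=
    sρ.mul_of_nonneg sρ hρ0 hρ0
  have sdiff : Summable fun q : (Fin d → ℤ) × (Fin d → ℤ) =>
      J q.1 * J q.2 - ρ q.1 * ρ q.2 := sJJ.sub sρρ
  have sabs : Summable fun q : (Fin d → ℤ) × (Fin d → ℤ) =>
      |J q.1 * J q.2 - ρ q.1 * ρ q.2| := sdiff.abs
  have hGb : ∀ q : (Fin d → ℤ) × (Fin d → ℤ),
      |g (q.1 - q.2) * (J q.1 * J q.2 - ρ q.1 * ρ q.2)| ≤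
        M * |J q.1 * J q.2 - ρ q.1 * ρ q.2| := by
    intro q
    rw [abs_mul, abs_of_nonneg (hg0 _)]
    exact mul_le_mul_of_nonneg_right (hMle _) (abs_nonneg _)
  have sGa : Summable fun q : (Fin d → ℤ) × (Fin d → ℤ) =>
      |g (q.1 - q.2) * (J q.1 * J q.2 - ρ q.1 * ρ q.2)| :=
    Summable.of_nonneg_of_le (fun q => abs_nonneg _) hGb (sabs.mul_left M)
  have sG : Summable fun q : (Fin d → ℤ) × (Fin d → ℤ) =>
      g (q.1 - q.2) * (J q.1 * J q.2 - ρ q.1 * ρ q.2) := sGa.of_abs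
  -- |tsum| ≤ M * tsum |diff|
  have step1 : |∑' q : (Fin d → ℤ) × (Fin d → ℤ),
      g (q.1 - q.2) * (J q.1 * J q.2 - ρ q.1 * ρ q.2)| ≤
      M * ∑' q : (Fin d → ℤ) × (Fin d → ℤ), |J q.1 * J q.2 - ρ q.1 * ρ q.2| := by
    calc |∑' q : (Fin d → ℤ) × (Fin d → ℤ),
        g (q.1 - q.2) * (J q.1 * J q.2 - ρ q.1 * ρ q.2)|
        ≤ ∑' q : (Fin d → ℤ) × (Fin d → ℤ),
            |g (q.1 - q.2) * (J q.1 * J q.2 - ρ q.1 * ρ q.2)| := by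
          have h := norm_tsum_le_tsum_norm (f := fun q : (Fin d → ℤ) × (Fin d → ℤ) =>
            g (q.1 - q.2) * (J q.1 * J q.2 - ρ q.1 * ρ q.2))
            (by simpa only [Real.norm_eq_abs] using sGa)
          simpa only [Real.norm_eq_abs] using h
      _ ≤ ∑' q : (Fin d → ℤ) × (Fin d → ℤ),
            M * |J q.1 * J q.2 - ρ q.1 * ρ q.2| :=
          Summable.tsum_le_tsum hGb sGa (sabs.mul_left M)
      _ = M * ∑' q : (Fin d → ℤ) × (Fin d → ℤ),
            |J q.1 * J q.2 - ρ q.1 * ρ q.2| := tsum_mul_left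
  -- bound 1 : tsum |diff| ≤ 2
  have bound1 : (∑' q : (Fin d → ℤ) × (Fin d → ℤ),
      |J q.1 * J q.2 - ρ q.1 * ρ q.2|) ≤ 2 := by
    have hpt : ∀ q : (Fin d → ℤ) × (Fin d → ℤ),
        |J q.1 * J q.2 - ρ q.1 * ρ q.2| ≤ J q.1 * J q.2 + ρ q.1 * ρ q.2 := by
      intro q
      have := abs_sub (J q.1 * J q.2) (ρ q.1 * ρ q.2)
      have h1 : |J q.1 * J q.2| = J q.1 * J q.2 :=
        abs_of_nonneg (mul_nonneg (hJ0 _) (hJ0 _))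
      have h2 : |ρ q.1 * ρ q.2| = ρ q.1 * ρ q.2 :=
        abs_of_nonneg (mul_nonneg (hρ0 _) (hρ0 _))
      calc |J q.1 * J q.2 - ρ q.1 * ρ q.2| ≤ |J q.1 * J q.2| + |ρ q.1 * ρ q.2| :=
            abs_sub _ _
        _ = J q.1 * J q.2 + ρ q.1 * ρ q.2 := by rw [h1, h2]
    have hJJ : HasSum (fun q : (Fin d → ℤ) × (Fin d → ℤ) => J q.1 * J q.2) 1 := by
      simpa using hJ1.mul hJ1 sJJ
    have hρρ : HasSum (fun q : (Fin d → ℤ) × (Fin d → ℤ) => ρ q.1 * ρ q.2) 1 := by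
      simpa using hρ1.mul hρ1 sρρ
    calc (∑' q : (Fin d → ℤ) × (Fin d → ℤ), |J q.1 * J q.2 - ρ q.1 * ρ q.2|)
        ≤ ∑' q : (Fin d → ℤ) × (Fin d → ℤ), (J q.1 * J q.2 + ρ q.1 * ρ q.2) :=
          Summable.tsum_le_tsum hpt sabs (sJJ.add sρρ)
      _ = 2 := by rw [(hJJ.add hρρ).tsum_eq]; norm_num
  -- bound 2 : tsum |diff| ≤ 2 * E
  have bound2 : (∑' q : (Fin d → ℤ) × (Fin d → ℤ),
      |J q.1 * J q.2 - ρ q.1 * ρ q.2|) ≤ 2 * E := by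
    set e : (Fin d → ℤ) → ℝ := fun x => |J x - ρ x| with he
    have hpt : ∀ q : (Fin d → ℤ) × (Fin d → ℤ),
        |J q.1 * J q.2 - ρ q.1 * ρ q.2| ≤ J q.1 * e q.2 + e q.1 * ρ q.2 := by
      intro q
      have key : J q.1 * J q.2 - ρ q.1 * ρ q.2
          = J q.1 * (J q.2 - ρ q.2) + (J q.1 - ρ q.1) * ρ q.2 := by ring
      rw [key]
      calc |J q.1 * (J q.2 - ρ q.2) + (J q.1 - ρ q.1) * ρ q.2|
          ≤ |J q.1 * (J q.2 - ρ q.2)| + |(J q.1 - ρ q.1) * ρ q.2| := abs_add_le _ _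
        _ = J q.1 * e q.2 + e q.1 * ρ q.2 := by
            rw [abs_mul, abs_mul, abs_of_nonneg (hJ0 _), abs_of_nonneg (hρ0 _)]
    have sJe : Summable fun q : (Fin d → ℤ) × (Fin d → ℤ) => J q.1 * e q.2 :=
      sJ.mul_of_nonneg hEs hJ0 fun x => abs_nonneg _
    have seρ : Summable fun q : (Fin d → ℤ) × (Fin d → ℤ) => e q.1 * ρ q.2 :=
      hEs.mul_of_nonneg sρ (fun x => abs_nonneg _) hρ0
    set E' := ∑' x, e x with hE'
    have hJe : HasSum (fun q : (Fin d → ℤ) × (Fin d → ℤ) => J q.1 * e q.2) (1 * E') :=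
      hJ1.mul hEs.hasSum sJe
    have heρ : HasSum (fun q : (Fin d → ℤ) × (Fin d → ℤ) => e q.1 * ρ q.2) (E' * 1) :=
      hEs.hasSum.mul hρ1 seρ
    have hE'0 : 0 ≤ E' := tsum_nonneg fun x => abs_nonneg _
    calc (∑' q : (Fin d → ℤ) × (Fin d → ℤ), |J q.1 * J q.2 - ρ q.1 * ρ q.2|)
        ≤ ∑' q : (Fin d → ℤ) × (Fin d → ℤ), (J q.1 * e q.2 + e q.1 * ρ q.2) :=
          Summable.tsum_le_tsum hpt sabs (sJe.add seρ)
      _ = 1 * E' + E' * 1 := (hJe.add heρ).tsum_eq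
      _ ≤ 2 * E := by rw [one_mul, mul_one]; linarith
  refine step1.trans ?_
  exact mul_le_mul_of_nonneg_left (le_min bound1 bound2) hM0

lemma stmt13_finball (d : ℕ) (r : ℝ) :
    {x : Fin d → ℤ | ((∑ i, |x i| : ℤ) : ℝ) ≤ r}.Finite := by
  have hsub : {x : Fin d → ℤ | ((∑ i, |x i| : ℤ) : ℝ) ≤ r} ⊆
      Set.pi Set.univ fun _ : Fin d => Set.Icc (-(⌈r⌉ : ℤ)) ⌈r⌉ := by
    intro x hx i _
    simp only [Set.mem_setOf_eq] at hx
    have h1 : (|x i| : ℤ) ≤ ∑ j, |x j| :=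
      Finset.single_le_sum (f := fun j => |x j|) (fun j _ => abs_nonneg _)
        (Finset.mem_univ i)
    have h2 : ((|x i| : ℤ) : ℝ) ≤ r := le_trans (by exact_mod_cast h1) hx
    have h3 : (|x i| : ℤ) ≤ ⌈r⌉ := by
      have := h2.trans (Int.le_ceil r)
      exact_mod_cast this
    have := abs_le.mp h3
    exact Set.mem_Icc.mpr this
  exact ((Set.Finite.pi fun _ => Set.finite_Icc _ _).subset hsub)

set_option maxHeartbeats 1600000 in
/-- Bounds on the one-update overlap increment: for `g ∈ ℓ¹` nonnegative and constants
`b, r`, there is a constant `C` such that for any probability vector `ρ`, any kernel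
`ξ` with `0 ≤ ξ_x ≤ b·1_{|x|≤r}`, and
`F_z(ξ) = Σ_{x,y} g(x−y)(J̄_{x,z} J̄_{y,z} − ρ_x ρ_y)` (with
`J̄_{x,z} = (ρ_x + (ξ−δ₀)_{x−z}ρ_z)/(1+(|ξ|−1)ρ_z)`):
(i) `|F_z(ξ)| ≤ 2|g|`; (ii) `|F_z(ξ)| ≤ C ρ_z` whenever `ρ_z ≤ 1/2`;
(iii) `Σ_z F_z(ξ)² ≤ (16|g|² + C²) Σ_x ρ_x²`. -/
theorem stmt13 {d : ℕ} (g : (Fin d → ℤ) → ℝ)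
    (hg0 : ∀ x, 0 ≤ g x) (hg : Summable g)
    (b r : ℝ) (hb : 0 ≤ b) (hr : 0 ≤ r) :
    ∃ C : ℝ, ∀ ρ ξ : (Fin d → ℤ) → ℝ, (∀ x, 0 ≤ ρ x) → HasSum ρ 1 →
      (∀ x, 0 ≤ ξ x ∧ ξ x ≤ b * (if ((∑ i, |x i| : ℤ) : ℝ) ≤ r then 1 else 0)) →
      ∀ F : (Fin d → ℤ) → ℝ,
        (∀ z, F z = ∑' q : (Fin d → ℤ) × (Fin d → ℤ), g (q.1 - q.2) *
            (((ρ q.1 + (ξ (q.1 - z) - (if q.1 - z = 0 then 1 else 0)) * ρ z) /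
                  (1 + ((∑' u, ξ u) - 1) * ρ z)) *
                ((ρ q.2 + (ξ (q.2 - z) - (if q.2 - z = 0 then 1 else 0)) * ρ z) /
                  (1 + ((∑' u, ξ u) - 1) * ρ z)) -
              ρ q.1 * ρ q.2)) →
        (∀ z, 0 < 1 + ((∑' u, ξ u) - 1) * ρ z → |F z| ≤ 2 * ∑' x, g x) ∧
        (∀ z, 0 < 1 + ((∑' u, ξ u) - 1) * ρ z → ρ z ≤ 1 / 2 → |F z| ≤ C * ρ z) ∧
        ((∀ z, 0 < 1 + ((∑' u, ξ u) - 1) * ρ z) →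
          ∑' z, (F z) ^ 2 ≤ (16 * (∑' x, g x) ^ 2 + C ^ 2) * ∑' x, (ρ x) ^ 2) := by
  classical
  have hfin := stmt13_finball d r
  set S : Finset (Fin d → ℤ) := hfin.toFinset with hS
  set M : ℝ := ∑' x, g x with hMdef
  have hM0 : 0 ≤ M := tsum_nonneg hg0
  refine ⟨8 * M * (b * S.card + 1), ?_⟩
  intro ρ ξ hρ0 hρ1 hξ F hF
  set C : ℝ := 8 * M * (b * S.card + 1) with hC
  -- ξ vanishes off S
  have hξ0 : ∀ x, 0 ≤ ξ x := fun x => (hξ x).1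
  have hξvan : ∀ x ∉ S, ξ x = 0 := by
    intro x hx
    have hxr : ¬ ((∑ i, |x i| : ℤ) : ℝ) ≤ r := by
      simpa [hS, Set.Finite.mem_toFinset] using hx
    have := (hξ x).2
    rw [if_neg hxr, mul_zero] at this
    exact le_antisymm this (hξ0 x)
  have hξs : Summable ξ := summable_of_ne_finset_zero hξvan
  set T : ℝ := ∑' u, ξ u with hT
  have hT0 : 0 ≤ T := tsum_nonneg hξ0
  have hTb : T ≤ b * S.card := by
    rw [hT, tsum_eq_sum hξvan]
    calc ∑ x ∈ S, ξ x ≤ ∑ _x ∈ S, b := by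
          refine Finset.sum_le_sum fun x _ => ?_
          refine (hξ x).2.trans ?_
          split_ifs <;> simp [hb]
      _ = b * S.card := by rw [Finset.sum_const, nsmul_eq_mul, mul_comm]
  -- per-z bounds via keyA
  have key : ∀ z, 0 < 1 + (T - 1) * ρ z →
      |F z| ≤ 2 * M ∧ (ρ z ≤ 1/2 → |F z| ≤ C * ρ z) := by
    intro z hD
    set D : ℝ := 1 + (T - 1) * ρ z with hDdef
    set J : (Fin d → ℤ) → ℝ := fun x =>
      (ρ x + (ξ (x - z) - if x - z = 0 then 1 else 0) * ρ z) / D with hJdef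
    have hsub : HasSum (fun x : Fin d → ℤ => ξ (x - z)) T := by
      exact (Equiv.hasSum_iff (Equiv.subRight z)).mpr hξs.hasSum
    have hdel : HasSum (fun x : Fin d → ℤ => if x - z = 0 then (1:ℝ) else 0) 1 := by
      simpa [sub_eq_zero] using hasSum_ite_eq z (1:ℝ)
    have hnum : HasSum (fun x =>
        ρ x + (ξ (x - z) - if x - z = 0 then 1 else 0) * ρ z) D :=
      hρ1.add ((hsub.sub hdel).mul_right (ρ z))
    have hJ1 : HasSum J 1 := by
      have := hnum.div_const D
      rwa [div_self hD.ne'] at this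
    have hJ0 : ∀ x, 0 ≤ J x := by
      intro x
      rw [hJdef]
      refine div_nonneg ?_ hD.le
      by_cases hxz : x - z = 0
      · have hx : x = z := by rwa [sub_eq_zero] at hxz
        rw [if_pos hxz, hxz, hx]
        nlinarith [hξ0 0, hρ0 z]
      · rw [if_neg hxz]
        have := hξ0 (x - z)
        nlinarith [hρ0 x, hρ0 z]
    have hEs : Summable fun x => |J x - ρ x| := (hJ1.summable.sub hρ1.summable).abs
    have hFz : F z = ∑' q : (Fin d → ℤ) × (Fin d → ℤ),
        g (q.1 - q.2) * (J q.1 * J q.2 - ρ q.1 * ρ q.2) := hF z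
    have KA := stmt13_keyA g hg0 hg ρ J hρ0 hρ1 hJ0 hJ1
      (∑' x, |J x - ρ x|) hEs le_rfl
    rw [← hMdef] at KA
    constructor
    · rw [hFz]
      refine KA.trans ?_
      rw [mul_comm]
      exact mul_le_mul_of_nonneg_right (min_le_left _ _) hM0
    · intro hhalf
      have hD2 : 1/2 ≤ D := by
        rw [hDdef]; nlinarith [hρ0 z, mul_nonneg hT0 (hρ0 z)]
      have hEb : (∑' x, |J x - ρ x|) ≤ 4 * (T + 1) * ρ z := by
        have hpt : ∀ x, |J x - ρ x| ≤ 2 * ρ z *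
            ((ξ (x - z) + (if x - z = 0 then (1:ℝ) else 0)) + (T + 1) * ρ x) := by
          intro x
          set δ : ℝ := if x - z = 0 then (1:ℝ) else 0 with hδ
          have hδ0 : 0 ≤ δ := by rw [hδ]; split_ifs <;> norm_num
          have hJx : J x - ρ x = ((ξ (x - z) - δ) * ρ z - (T - 1) * ρ z * ρ x) / D := by
            rw [hJdef]
            field_simp
            ring
          rw [hJx, abs_div, abs_of_pos hD]
          have habs : |(ξ (x - z) - δ) * ρ z - (T - 1) * ρ z * ρ x| ≤
              ρ z * ((ξ (x - z) + δ) + (T + 1) * ρ x) := by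
            have h1 : |ξ (x - z) - δ| ≤ ξ (x - z) + δ := by
              have := abs_sub (ξ (x - z)) δ
              rwa [abs_of_nonneg (hξ0 _), abs_of_nonneg hδ0] at this
            have h2 : |T - 1| ≤ T + 1 := by
              rw [abs_le]; constructor <;> linarith
            calc |(ξ (x - z) - δ) * ρ z - (T - 1) * ρ z * ρ x|
                ≤ |(ξ (x - z) - δ) * ρ z| + |(T - 1) * ρ z * ρ x| := abs_sub _ _
              _ = |ξ (x - z) - δ| * ρ z + |T - 1| * ρ z * ρ x := by
                  rw [abs_mul, abs_mul, abs_mul, abs_of_nonneg (hρ0 z),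
                    abs_of_nonneg (hρ0 x)]
              _ ≤ (ξ (x - z) + δ) * ρ z + (T + 1) * ρ z * ρ x := by
                  have := hρ0 z; have := hρ0 x
                  nlinarith [mul_nonneg (hρ0 z) (hρ0 x)]
              _ = ρ z * ((ξ (x - z) + δ) + (T + 1) * ρ x) := by ring
          have hs0 : 0 ≤ (ξ (x - z) + δ) + (T + 1) * ρ x :=
            add_nonneg (add_nonneg (hξ0 _) hδ0)
              (mul_nonneg (by linarith) (hρ0 x))
          calc |(ξ (x - z) - δ) * ρ z - (T - 1) * ρ z * ρ x| / D
              ≤ (ρ z * ((ξ (x - z) + δ) + (T + 1) * ρ x)) / D :=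
                (div_le_div_iff_of_pos_right hD).mpr habs
            _ ≤ 2 * ρ z * ((ξ (x - z) + δ) + (T + 1) * ρ x) := by
                rw [div_le_iff₀ hD]
                nlinarith [mul_nonneg (mul_nonneg (hρ0 z) hs0)
                  (by linarith : (0:ℝ) ≤ 2 * D - 1)]
        have smaj : Summable fun x => 2 * ρ z *
            ((ξ (x - z) + (if x - z = 0 then (1:ℝ) else 0)) + (T + 1) * ρ x) :=
          ((hsub.summable.add hdel.summable).add
            (hρ1.summable.mul_left (T + 1))).mul_left (2 * ρ z)
        have hms : HasSum (fun x => 2 * ρ z *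
            ((ξ (x - z) + (if x - z = 0 then (1:ℝ) else 0)) + (T + 1) * ρ x))
            (2 * ρ z * ((T + 1) + (T + 1) * 1)) :=
          ((hsub.add hdel).add (hρ1.mul_left (T + 1))).mul_left (2 * ρ z)
        calc (∑' x, |J x - ρ x|)
            ≤ ∑' x, 2 * ρ z *
              ((ξ (x - z) + (if x - z = 0 then (1:ℝ) else 0)) + (T + 1) * ρ x) :=
              Summable.tsum_le_tsum hpt hEs smaj
          _ = 2 * ρ z * ((T + 1) + (T + 1) * 1) := hms.tsum_eq
          _ = 4 * (T + 1) * ρ z := by ring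
      rw [hFz]
      refine KA.trans ?_
      have step : M * min 2 (2 * ∑' x, |J x - ρ x|) ≤ M * (2 * (4 * (T + 1) * ρ z)) := by
        refine mul_le_mul_of_nonneg_left ((min_le_right _ _).trans ?_) hM0
        linarith
      refine step.trans ?_
      rw [hC]
      nlinarith [mul_nonneg (mul_nonneg hM0 (hρ0 z)) (sub_nonneg.mpr hTb)]
  refine ⟨fun z hD => (key z hD).1, fun z hD hhalf => (key z hD).2 hhalf, ?_⟩
  intro hDall
  have hρle1 : ∀ x, ρ x ≤ 1 := fun x => le_hasSum hρ1 x fun j _ => hρ0 j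
  have sρ2 : Summable fun x => (ρ x) ^ 2 :=
    Summable.of_nonneg_of_le (fun x => sq_nonneg _)
      (fun x => by nlinarith [hρ0 x, hρle1 x]) hρ1.summable
  have hpt : ∀ z, (F z) ^ 2 ≤ (16 * M ^ 2 + C ^ 2) * ρ z ^ 2 := by
    intro z
    have hD := hDall z
    by_cases hhalf : ρ z ≤ 1/2
    · have h2 := (key z hD).2 hhalf
      have h0 := abs_nonneg (F z)
      nlinarith [sq_abs (F z), mul_self_le_mul_self h0 h2, sq_nonneg (M * ρ z)]
    · have h1 := (key z hD).1
      push_neg at hhalf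
      have hsq : |F z| ≤ 4 * M * ρ z := by nlinarith [hM0]
      nlinarith [sq_abs (F z), mul_self_le_mul_self (abs_nonneg (F z)) hsq,
        sq_nonneg (C * ρ z)]
  have sF2 : Summable fun z => (F z) ^ 2 :=
    Summable.of_nonneg_of_le (fun z => sq_nonneg _) hpt (sρ2.mul_left _)
  calc ∑' z, (F z) ^ 2 ≤ ∑' z, (16 * M ^ 2 + C ^ 2) * ρ z ^ 2 :=
        Summable.tsum_le_tsum hpt sF2 (sρ2.mul_left _)
    _ = (16 * M ^ 2 + C ^ 2) * ∑' x, ρ x ^ 2 := tsum_mul_left
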